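/- Let n ≥ 1, Σ ∈ S_n, Θ ∈ A_n, and suppose the complex Hermitian matrix S := Σ + (i/2)Θ is positive definite, so that Σ is positive definite. Set Ξ := (1/2)·Σ^{−1/2} Θ Σ^{−1/2} (using the unique positive definite symmetric square root Σ^{1/2} of Σ). Then for every R ∈ S_n, Tr(R(ΣRΣ + ΘRΘ/4)) ≥ (1 − ‖Ξ‖²) · ‖Σ^{1/2} R Σ^{1/2}‖_F², where ‖Ξ‖ is the spectral norm of Ξ and ‖·‖_F is the Frobenius norm. -/

import Mathlib

open Matrix ComplexOrder

/-- The spectral (operator) norm of a real `n × n` matrix `M`, i.e. the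
operator norm of the induced map on Euclidean space, equal to
`sqrt(λ_max(MᵀM))`. -/
noncomputable def specNorm {n : ℕ} (M : Matrix (Fin n) (Fin n) ℝ) : ℝ :=
  ‖Matrix.toEuclideanCLM (𝕜 := ℝ) M‖

/-- The Frobenius norm of a real `n × n` matrix: `‖M‖_F = sqrt(Tr(MᵀM))`. -/
noncomputable def frobNorm {n : ℕ} (M : Matrix (Fin n) (Fin n) ℝ) : ℝ :=
  Real.sqrt (Mᵀ * M).trace
noncomputable def Matrix.PosSemidef.sqrt {n : Type*} [Fintype n] [DecidableEq n]
    {𝕜 : Type*} [RCLike 𝕜] {A : Matrix n n 𝕜} (hA : A.PosSemidef) : Matrix n n 𝕜 :=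
  (hA.1.eigenvectorUnitary : Matrix n n 𝕜) * diagonal ((↑) ∘ Real.sqrt ∘ hA.1.eigenvalues) *
    (star (hA.1.eigenvectorUnitary : Matrix n n 𝕜))

lemma Matrix.PosSemidef.sqrt_mul_self {n : Type*} [Fintype n] [DecidableEq n]
    {𝕜 : Type*} [RCLike 𝕜] {A : Matrix n n 𝕜} (hA : A.PosSemidef) : hA.sqrt * hA.sqrt = A := by
  have hU : (star (hA.1.eigenvectorUnitary : Matrix n n 𝕜)) * (hA.1.eigenvectorUnitary : Matrix n n 𝕜) = 1 :=
    Unitary.star_mul_self_of_mem (SetLike.coe_mem _)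
  conv_rhs => rw [hA.1.spectral_theorem, Unitary.conjStarAlgAut_apply]
  rw [Matrix.PosSemidef.sqrt]
  calc _ = (hA.1.eigenvectorUnitary : Matrix n n 𝕜) * (diagonal ((↑) ∘ Real.sqrt ∘ hA.1.eigenvalues) *
      (star (hA.1.eigenvectorUnitary : Matrix n n 𝕜) * (hA.1.eigenvectorUnitary : Matrix n n 𝕜)) *
      diagonal ((↑) ∘ Real.sqrt ∘ hA.1.eigenvalues)) * (star (hA.1.eigenvectorUnitary : Matrix n n 𝕜)) := by
        simp only [Matrix.mul_assoc]
    _ = _ := by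
        rw [hU, Matrix.mul_one, diagonal_mul_diagonal]
        congr 3
        funext i
        simp only [Function.comp]
        rw [← RCLike.ofReal_mul, Real.mul_self_sqrt (hA.eigenvalues_nonneg i)]

lemma Matrix.PosSemidef.isHermitian_sqrt {n : Type*} [Fintype n] [DecidableEq n]
    {𝕜 : Type*} [RCLike 𝕜] {A : Matrix n n 𝕜} (hA : A.PosSemidef) : hA.sqrt.IsHermitian := by
  rw [Matrix.PosSemidef.sqrt, star_eq_conjTranspose]
  apply isHermitian_mul_mul_conjTranspose
  apply isHermitian_diagonal_of_self_adjoint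
  ext i
  simp

set_option maxHeartbeats 1000000

open scoped Matrix.Norms.L2Operator in
lemma specNorm_eq_l2 {n : ℕ} (M : Matrix (Fin n) (Fin n) ℝ) : specNorm M = ‖M‖ :=
  (Matrix.cstar_norm_def M).symm

lemma tr_frob {n : ℕ} (N : Matrix (Fin n) (Fin n) ℝ) :
    (Nᵀ * N).trace = ∑ i, ∑ j, (N i j) ^ 2 := by
  simp only [Matrix.trace, Matrix.diag, Matrix.mul_apply, Matrix.transpose_apply, sq]
  rw [Finset.sum_comm]

lemma trace_transpose_mul_self_nonneg {n : ℕ} (M : Matrix (Fin n) (Fin n) ℝ) :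
    0 ≤ (Mᵀ * M).trace := by
  rw [tr_frob]
  exact Finset.sum_nonneg fun i _ => Finset.sum_nonneg fun j _ => sq_nonneg _

lemma trace_sq_ge_neg {n : ℕ} (M : Matrix (Fin n) (Fin n) ℝ) :
    (M * M).trace ≥ -(Mᵀ * M).trace := by
  have h0 := trace_transpose_mul_self_nonneg (M + Mᵀ)
  have hexp : ((M + Mᵀ)ᵀ * (M + Mᵀ)) = Mᵀ * M + Mᵀ * Mᵀ + M * M + M * Mᵀ := by
    simp only [Matrix.transpose_add, Matrix.transpose_transpose, add_mul, mul_add]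
    abel
  rw [hexp] at h0
  simp only [Matrix.trace_add] at h0
  have h1 : (Mᵀ * Mᵀ).trace = (M * M).trace := by
    rw [← Matrix.transpose_mul, Matrix.trace_transpose]
  have h2 : (M * Mᵀ).trace = (Mᵀ * M).trace := Matrix.trace_mul_comm M Mᵀ
  linarith

open scoped Matrix.Norms.L2Operator in
lemma trace_mul_op_bound {n : ℕ} (M Ξ : Matrix (Fin n) (Fin n) ℝ) :
    ((M * Ξ)ᵀ * (M * Ξ)).trace ≤ specNorm Ξᵀ ^ 2 * (Mᵀ * M).trace := by
  rw [specNorm_eq_l2]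
  have key : ∀ i : Fin n, ∑ j, ((M * Ξ) i j) ^ 2 ≤ ‖Ξᵀ‖ ^ 2 * ∑ k, (M i k) ^ 2 := by
    intro i
    have hv := Matrix.l2_opNorm_mulVec Ξᵀ ((EuclideanSpace.equiv (Fin n) ℝ).symm (M i))
    have hle : ‖(EuclideanSpace.equiv (Fin n) ℝ).symm (Ξᵀ *ᵥ M i)‖ ^ 2 ≤
        (‖Ξᵀ‖ * ‖(EuclideanSpace.equiv (Fin n) ℝ).symm (M i)‖) ^ 2 := by
      apply pow_le_pow_left₀ (norm_nonneg _) _ 2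
      simpa using hv
    have e1 : ‖(EuclideanSpace.equiv (Fin n) ℝ).symm (Ξᵀ *ᵥ M i)‖ ^ 2
        = ∑ j, ((M * Ξ) i j) ^ 2 := by
      rw [EuclideanSpace.norm_eq, Real.sq_sqrt (by positivity)]
      refine Finset.sum_congr rfl fun j _ => ?_
      rw [Real.norm_eq_abs, sq_abs]
      congr 1
      show (Ξᵀ *ᵥ M i) j = _
      simp only [Matrix.mulVec, Matrix.mul_apply, dotProduct, Matrix.transpose_apply]
      exact Finset.sum_congr rfl fun k _ => mul_comm _ _
    have e2 : ‖(EuclideanSpace.equiv (Fin n) ℝ).symm (M i)‖ ^ 2 = ∑ k, (M i k) ^ 2 := by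
      rw [EuclideanSpace.norm_eq, Real.sq_sqrt (by positivity)]
      refine Finset.sum_congr rfl fun k _ => ?_
      show ‖M i k‖ ^ 2 = _
      rw [Real.norm_eq_abs, sq_abs]
    rw [mul_pow] at hle
    rw [← e1, ← e2]
    exact hle
  rw [tr_frob, tr_frob, Finset.mul_sum]
  exact Finset.sum_le_sum fun i _ => key i

lemma K_coercivity_aux {n : ℕ} (A B R Θ : Matrix (Fin n) (Fin n) ℝ)
    (hAT : Aᵀ = A) (hBT : Bᵀ = B) (hBA : B * A = 1) (hAB : A * B = 1)
    (hR : Rᵀ = R) (hΘ : Θᵀ = -Θ) :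
    (R * (A * A * R * (A * A) + (1 / 4 : ℝ) • (Θ * R * Θ))).trace ≥
      (1 - specNorm ((1 / 2 : ℝ) • (B * Θ * B)) ^ 2) * frobNorm (A * R * A) ^ 2 := by
  set X := A * R * A with hXdef
  set Ξ := (1 / 2 : ℝ) • (B * Θ * B) with hΞdef
  have hXT : Xᵀ = X := by
    rw [hXdef, Matrix.transpose_mul, Matrix.transpose_mul, hAT, hR, mul_assoc]
  have hΞT : Ξᵀ = -Ξ := by
    rw [hΞdef, Matrix.transpose_smul, Matrix.transpose_mul, Matrix.transpose_mul,
      hBT, hΘ]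
    simp [Matrix.mul_neg, Matrix.neg_mul, mul_assoc]
  have tr1 : (R * (A * A * R * (A * A))).trace = (Xᵀ * X).trace := by
    rw [hXT]
    have h : R * (A * A * R * (A * A)) = (R * A) * (A * R * A * A) := by
      noncomm_ring
    rw [h, Matrix.trace_mul_comm, hXdef]
    congr 1; noncomm_ring
  have tr2 : (R * ((1 / 4 : ℝ) • (Θ * R * Θ))).trace = ((X * Ξ) * (X * Ξ)).trace := by
    have hXΞ : X * Ξ = (1 / 2 : ℝ) • (A * R * Θ * B) := by
      rw [hXdef, hΞdef, Matrix.mul_smul]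
      congr 1
      calc A * R * A * (B * Θ * B) = A * R * (A * B) * Θ * B := by noncomm_ring
        _ = A * R * Θ * B := by rw [hAB]; noncomm_ring
    have hmul : (X * Ξ) * (X * Ξ) = (1 / 4 : ℝ) • (A * (R * (Θ * R * Θ)) * B) := by
      rw [hXΞ, smul_mul_assoc, mul_smul_comm, smul_smul]
      norm_num
      calc A * R * Θ * B * (A * R * Θ * B) = A * R * Θ * (B * A) * R * Θ * B := by noncomm_ring
        _ = A * (R * (Θ * R * Θ)) * B := by rw [hBA]; noncomm_ring
    have htr : (A * (R * (Θ * R * Θ)) * B).trace = (R * (Θ * R * Θ)).trace := by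
      rw [Matrix.trace_mul_comm, ← mul_assoc, hBA, one_mul]
    rw [mul_smul_comm, hmul, Matrix.trace_smul, Matrix.trace_smul, htr]
  have expand : (R * (A * A * R * (A * A) + (1 / 4 : ℝ) • (Θ * R * Θ))).trace
      = (Xᵀ * X).trace + ((X * Ξ) * (X * Ξ)).trace := by
    rw [mul_add, Matrix.trace_add, tr1, tr2]
  set c := specNorm Ξ with hcdef
  have hcT : specNorm Ξᵀ = c := by
    rw [hΞT, hcdef, specNorm, specNorm, map_neg, norm_neg]
  have hbound : ((X * Ξ)ᵀ * (X * Ξ)).trace ≤ c ^ 2 * (Xᵀ * X).trace := by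
    have h := trace_mul_op_bound X Ξ
    rwa [hcT] at h
  have hge : ((X * Ξ) * (X * Ξ)).trace ≥ -((X * Ξ)ᵀ * (X * Ξ)).trace :=
    trace_sq_ge_neg (X * Ξ)
  have hfrob : frobNorm X ^ 2 = (Xᵀ * X).trace := by
    rw [frobNorm, Real.sq_sqrt (trace_transpose_mul_self_nonneg X)]
  have hTnn : 0 ≤ (Xᵀ * X).trace := trace_transpose_mul_self_nonneg X
  rw [expand, hfrob]
  nlinarith [hbound, hge, hTnn]

/-- Appendix C of the paper: coercivity bound for the operator
`K(R) = ΣRΣ + ΘRΘ/4`.  If `S = Σ + (i/2)Θ` is positive definite (so that `Σ`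
is positive definite), then with `Ξ = (1/2) Σ^{−1/2} Θ Σ^{−1/2}`,
`Tr(R K(R)) ≥ (1 − ‖Ξ‖²) ‖Σ^{1/2} R Σ^{1/2}‖_F²` for all real symmetric `R`. -/
theorem K_coercivity_bound
    {n : ℕ} (hn : 1 ≤ n)
    (Sgm Θ : Matrix (Fin n) (Fin n) ℝ)
    (hSgmSymm : Sgm.IsSymm) (hΘ : Θᵀ = -Θ)
    (hS : (Sgm.map (Complex.ofReal) +
      (Complex.I / 2) • Θ.map (Complex.ofReal)).PosDef)
    (hSgmPd : Sgm.PosDef) :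
    ∀ R : Matrix (Fin n) (Fin n) ℝ, R.IsSymm →
      (R * (Sgm * R * Sgm + (1 / 4 : ℝ) • (Θ * R * Θ))).trace ≥
        (1 - specNorm ((1 / 2 : ℝ) •
            ((hSgmPd.posSemidef.sqrt)⁻¹ * Θ * (hSgmPd.posSemidef.sqrt)⁻¹)) ^ 2) *
          frobNorm (hSgmPd.posSemidef.sqrt * R * hSgmPd.posSemidef.sqrt) ^ 2 := by
  intro R hR
  have hA : hSgmPd.posSemidef.sqrt * hSgmPd.posSemidef.sqrt = Sgm :=
    hSgmPd.posSemidef.sqrt_mul_self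
  have hAT : (hSgmPd.posSemidef.sqrt)ᵀ = hSgmPd.posSemidef.sqrt := by
    have h := hSgmPd.posSemidef.isHermitian_sqrt
    rwa [Matrix.IsHermitian, Matrix.conjTranspose_eq_transpose_of_trivial] at h
  have hdet : IsUnit (hSgmPd.posSemidef.sqrt).det := by
    have hd : (hSgmPd.posSemidef.sqrt).det * (hSgmPd.posSemidef.sqrt).det = Sgm.det := by
      rw [← Matrix.det_mul, hA]
    refine isUnit_iff_ne_zero.2 fun h => hSgmPd.det_pos.ne' ?_
    rw [← hd, h, mul_zero]
  have hBA := Matrix.nonsing_inv_mul _ hdet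
  have hAB := Matrix.mul_nonsing_inv _ hdet
  have hBT : ((hSgmPd.posSemidef.sqrt)⁻¹)ᵀ = (hSgmPd.posSemidef.sqrt)⁻¹ := by
    rw [Matrix.transpose_nonsing_inv, hAT]
  have h := K_coercivity_aux hSgmPd.posSemidef.sqrt (hSgmPd.posSemidef.sqrt)⁻¹ R Θ
    hAT hBT hBA hAB hR.eq hΘ
  rwa [hA] at h
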